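/- The kernel of the BayesCG posterior covariance Σ_m := Σ₀ − Σ₀ Aᵀ S_m S_mᵀ A Σ₀ (with Σ₀ symmetric positive definite, A invertible, S_mᵀ A Σ₀ Aᵀ S_m = I_m) equals the span of the vectors Aᵀ s₁, …, Aᵀ s_m, where sᵢ are the columns of S_m. -/

import Mathlib

open Matrix

/-- The kernel of the BayesCG posterior covariance `Σₘ = Σ₀ − Σ₀ Aᵀ Sₘ Sₘᵀ A Σ₀` is the span
of the vectors `Aᵀ s₁, …, Aᵀ sₘ`, where `sᵢ` are the columns of `Sₘ`. -/
theorem stmt_14 {d m : ℕ} (A Sig0 : Matrix (Fin d) (Fin d) ℝ)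
    (hA : IsUnit A.det) (hSig0 : Sig0.PosDef)
    (S : Matrix (Fin d) (Fin m) ℝ) (hS : Sᵀ * (A * Sig0 * Aᵀ) * S = 1) :
    LinearMap.ker (Matrix.toLin' (Sig0 - Sig0 * Aᵀ * S * Sᵀ * A * Sig0)) =
      Submodule.span ℝ (Set.range fun i : Fin m => Aᵀ *ᵥ (Sᵀ i)) := by
  have hdet : IsUnit Sig0.det := isUnit_iff_ne_zero.mpr hSig0.det_pos.ne'
  have hcol : (fun i : Fin m => Aᵀ *ᵥ (Sᵀ i)) = (Aᵀ * S)ᵀ := by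
    funext i j
    simp [Matrix.mul_apply, Matrix.mulVec, dotProduct, mul_comm]
  rw [hcol, show (Aᵀ * S)ᵀ = Matrix.col (Aᵀ * S) from rfl, ← Matrix.range_toLin']
  have hS' : Sᵀ * A * Sig0 * (Aᵀ * S) = 1 := by
    rw [← hS]; simp [Matrix.mul_assoc]
  have hzero : (Sig0 - Sig0 * Aᵀ * S * Sᵀ * A * Sig0) * (Aᵀ * S) = 0 := by
    have h : Sig0 * Aᵀ * S * Sᵀ * A * Sig0 * (Aᵀ * S)
        = Sig0 * Aᵀ * S * (Sᵀ * A * Sig0 * (Aᵀ * S)) := by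
      simp [Matrix.mul_assoc]
    rw [Matrix.sub_mul, h, hS', Matrix.mul_one]
    simp [Matrix.mul_assoc]
  apply le_antisymm
  · intro x hx
    simp only [LinearMap.mem_ker, Matrix.toLin'_apply] at hx
    refine ⟨(Sᵀ * A * Sig0) *ᵥ x, ?_⟩
    simp only [Matrix.toLin'_apply]
    have h1 : (Sig0⁻¹ * (Sig0 - Sig0 * Aᵀ * S * Sᵀ * A * Sig0)) *ᵥ x = 0 := by
      rw [← Matrix.mulVec_mulVec, hx, Matrix.mulVec_zero]
    have h2 : Sig0⁻¹ * (Sig0 - Sig0 * Aᵀ * S * Sᵀ * A * Sig0)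
        = 1 - Aᵀ * S * Sᵀ * A * Sig0 := by
      rw [Matrix.mul_sub, Matrix.nonsing_inv_mul _ hdet]
      congr 1
      simp [← Matrix.mul_assoc, Matrix.nonsing_inv_mul _ hdet]
    rw [h2, Matrix.sub_mulVec, Matrix.one_mulVec] at h1
    have h3 := sub_eq_zero.mp h1
    simp only [Matrix.mulVec_mulVec]
    simp only [Matrix.mul_assoc] at h3 ⊢
    exact h3.symm
  · rintro x ⟨c, rfl⟩
    simp only [LinearMap.mem_ker, Matrix.toLin'_apply, Matrix.mulVec_mulVec,
      ← Matrix.mulVec_mulVec, hzero]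
    simp [Matrix.mulVec_mulVec, hzero]
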